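/- If G is a spider of order n ≥ 3, then γ_{r2}(G) ≤ 3n/4, with equality if and only if G is a path on four vertices. -/

import Mathlib

open Finset

/-- A `k`-rainbow dominating function: every vertex assigned `∅` sees all `k` colors
among its neighbors. -/
def SimpleGraph.IsRainbowDF {V : Type*} {k : ℕ} (G : SimpleGraph V)
    (f : V → Finset (Fin k)) : Prop :=
  ∀ v, f v = ∅ → ∀ c : Fin k, ∃ u, G.Adj v u ∧ c ∈ f u

/-- The `k`-rainbow domination number. -/
noncomputable def SimpleGraph.rainbowNum {V : Type*} [Fintype V] (G : SimpleGraph V)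
    (k : ℕ) : ℕ :=
  sInf {w | ∃ f : V → Finset (Fin k), G.IsRainbowDF f ∧ w = ∑ v, (f v).card}

/-- `S` is a dominating set of `G`. -/
def SimpleGraph.IsDomSet {V : Type*} (G : SimpleGraph V) (S : Set V) : Prop :=
  ∀ v, v ∉ S → ∃ u ∈ S, G.Adj v u

/-- The domination number. -/
noncomputable def SimpleGraph.domNum {V : Type*} [Fintype V] (G : SimpleGraph V) : ℕ :=
  sInf {n | ∃ S : Finset V, G.IsDomSet ↑S ∧ n = S.card}

/-- A spider with center `c`: a tree obtained from a star `K_{1,t}` (`t ≥ 2`) by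
subdividing some of its edges, each at most once. Equivalently: a tree in which every
vertex is within distance 2 of `c`, every vertex other than `c` has degree at most 2,
every vertex at distance 2 from `c` is a leaf, and `c` has degree at least 2. -/
def SimpleGraph.IsSpider {V : Type*} [Fintype V] (G : SimpleGraph V)
    [DecidableRel G.Adj] (c : V) : Prop :=
  G.IsTree ∧ 2 ≤ G.degree c ∧
    ∀ v, v ≠ c → G.degree v ≤ 2 ∧ G.dist c v ≤ 2 ∧ (G.dist c v = 2 → G.degree v = 1)

open SimpleGraph

set_option linter.unusedSectionVars false
set_option maxHeartbeats 1000000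

section AuxRainbow

variable {V : Type*} [Fintype V] {G : SimpleGraph V}

private lemma aux_no_tri (ha : G.IsAcyclic) {x y z : V} (hxy : G.Adj x y) (hyz : G.Adj y z)
    (hxz : G.Adj x z) : False := by
  have hp : (Walk.cons hxz Walk.nil : G.Walk x z).IsPath := by
    simp [Walk.isPath_def, hxz.ne]
  have hq : (Walk.cons hxy (Walk.cons hyz Walk.nil) : G.Walk x z).IsPath := by
    simp [Walk.isPath_def, hxy.ne, hyz.ne, hxz.ne]
  have h2 := ha.path_unique ⟨_, hp⟩ ⟨_, hq⟩
  have := congrArg (fun P : G.Path x z => P.1.length) h2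
  simp at this

private lemma aux_walk2 {u v : V} (p : G.Walk u v) (hp : p.length = 2) :
    ∃ m, G.Adj u m ∧ G.Adj m v := by
  cases p with
  | nil => simp at hp
  | cons h q =>
    cases q with
    | nil => simp at hp
    | cons h' r =>
      cases r with
      | nil => exact ⟨_, h, h'⟩
      | cons h'' r' => simp [Walk.length_cons] at hp

private lemma aux_fin4 : ∀ w x y z : Fin 4,
    (w.val + 1 = x.val ∨ x.val + 1 = w.val) → (w.val + 1 = y.val ∨ y.val + 1 = w.val) →
    (w.val + 1 = z.val ∨ z.val + 1 = w.val) → x = y ∨ x = z ∨ y = z := by decide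

private lemma aux_build_iso {p c m l : V} (hcard4 : Fintype.card V = 4)
    (hpc : p ≠ c) (hpm : p ≠ m) (hpl : p ≠ l) (hmc : m ≠ c) (hlc : l ≠ c) (hml2 : m ≠ l)
    (hcp : G.Adj c p) (hcm : G.Adj c m) (hml : G.Adj m l)
    (hn1 : ¬G.Adj c l) (hn2 : ¬G.Adj p m) (hn3 : ¬G.Adj p l) :
    Nonempty (G ≃g SimpleGraph.pathGraph 4) := by
  have hirr : ∀ v : V, ¬ G.Adj v v := fun v => G.irrefl
  have hn1' : ¬G.Adj l c := fun h => hn1 h.symm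
  have hn2' : ¬G.Adj m p := fun h => hn2 h.symm
  have hn3' : ¬G.Adj l p := fun h => hn3 h.symm
  set g : Fin 4 → V := fun i => if i = 0 then p else if i = 1 then c else if i = 2 then m else l
    with hg
  have hginj : Function.Injective g := by
    intro i j hij
    fin_cases i <;> fin_cases j <;> simp_all [hg] <;>
      first
        | rfl
        | (exfalso; first
            | exact hpc hij | exact hpm hij | exact hpl hij
            | exact hpc hij.symm | exact hpm hij.symm | exact hpl hij.symm
            | exact hmc hij.symm | exact hlc hij.symm | exact hml2 hij
            | exact hmc hij | exact hlc hij | exact hml2 hij.symm)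
  have hbij : Function.Bijective g :=
    (Fintype.bijective_iff_injective_and_card g).mpr ⟨hginj, by rw [hcard4, Fintype.card_fin]⟩
  refine ⟨SimpleGraph.Iso.symm ⟨Equiv.ofBijective g hbij, ?_⟩⟩
  intro a b
  show G.Adj (g a) (g b) ↔ (pathGraph 4).Adj a b
  fin_cases a <;> fin_cases b <;>
    rw [pathGraph_adj] <;>
    simp [hg, hirr, hcp, hcm, hml, hcp.symm, hcm.symm, hml.symm, hn1, hn2, hn3, hn1', hn2', hn3']

private lemma aux_lower_bound3 [DecidableEq V] {p c m l : V}
    (huniv4 : (Finset.univ : Finset V) = ({p, c, m, l} : Finset V))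
    (hpc : p ≠ c) (hpm : p ≠ m) (hpl : p ≠ l) (hmc : m ≠ c) (hlc : l ≠ c) (hml2 : m ≠ l)
    (hNp : ∀ u, G.Adj p u → u = c) (hNm : ∀ u, G.Adj m u → u = c ∨ u = l)
    (hNl : ∀ u, G.Adj l u → u = m) :
    3 ≤ G.rainbowNum 2 := by
  have hne : {w | ∃ f : V → Finset (Fin 2), G.IsRainbowDF f ∧ w = ∑ v, (f v).card}.Nonempty := by
    refine ⟨_, fun _ => ({0, 1} : Finset (Fin 2)), fun v hv => ?_, rfl⟩
    simp at hv
  refine le_csInf hne ?_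
  rintro w ⟨f, hf, rfl⟩
  have h2card : ∀ S : Finset (Fin 2), (0 : Fin 2) ∈ S → (1 : Fin 2) ∈ S → 2 ≤ S.card := by
    intro S h0 h1
    have hsub : ({0, 1} : Finset (Fin 2)) ⊆ S := by
      intro x hx
      simp only [Finset.mem_insert, Finset.mem_singleton] at hx
      rcases hx with rfl | rfl <;> assumption
    have := Finset.card_le_card hsub
    simpa using this
  have hsum4 : ∑ v, (f v).card =
      (f p).card + ((f c).card + ((f m).card + (f l).card)) := by
    rw [huniv4, Finset.sum_insert (by simp [hpc, hpm, hpl]),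
      Finset.sum_insert (by simp [Ne.symm hmc, Ne.symm hlc]),
      Finset.sum_insert (by simp [hml2]), Finset.sum_singleton]
  rw [hsum4]
  by_contra hlt
  push_neg at hlt
  by_cases hfl : f l = ∅
  · obtain ⟨u0, hu0, h0⟩ := hf l hfl 0
    obtain ⟨u1, hu1, h1⟩ := hf l hfl 1
    rw [hNl u0 hu0] at h0
    rw [hNl u1 hu1] at h1
    have hm2 := h2card _ h0 h1
    by_cases hfp : f p = ∅
    · obtain ⟨w0, hw0, g0⟩ := hf p hfp 0
      obtain ⟨w1, hw1, g1⟩ := hf p hfp 1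
      rw [hNp w0 hw0] at g0
      rw [hNp w1 hw1] at g1
      have hc2 := h2card _ g0 g1
      omega
    · have := Finset.card_pos.mpr (Finset.nonempty_iff_ne_empty.mpr hfp)
      omega
  · have hl1 := Finset.card_pos.mpr (Finset.nonempty_iff_ne_empty.mpr hfl)
    by_cases hfp : f p = ∅
    · obtain ⟨w0, hw0, g0⟩ := hf p hfp 0
      obtain ⟨w1, hw1, g1⟩ := hf p hfp 1
      rw [hNp w0 hw0] at g0
      rw [hNp w1 hw1] at g1
      have hc2 := h2card _ g0 g1
      omega
    · have hp1 := Finset.card_pos.mpr (Finset.nonempty_iff_ne_empty.mpr hfp)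
      have hfc : f c = ∅ := Finset.card_eq_zero.mp (by omega)
      have hfm : f m = ∅ := Finset.card_eq_zero.mp (by omega)
      have key : ∀ col : Fin 2, col ∈ f l := by
        intro col
        obtain ⟨u, hu, hcol⟩ := hf m hfm col
        rcases hNm u hu with rfl | rfl
        · rw [hfc] at hcol; simp at hcol
        · exact hcol
      have := h2card _ (key 0) (key 1)
      omega

end AuxRainbow

/-- For a spider `G` of order `n ≥ 3`, `γ_{r2}(G) ≤ 3n/4`, with equality iff `G` is
the path on four vertices. -/
theorem rainbow2_spider {V : Type*} [Fintype V] (G : SimpleGraph V)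
    [DecidableRel G.Adj] (c : V) (h : G.IsSpider c) (hn : 3 ≤ Fintype.card V) :
    4 * G.rainbowNum 2 ≤ 3 * Fintype.card V ∧
      (4 * G.rainbowNum 2 = 3 * Fintype.card V ↔
        Nonempty (G ≃g SimpleGraph.pathGraph 4)) := by
  classical
  obtain ⟨htree, hdegc, hstr⟩ := h
  have hconn : G.Connected := htree.isConnected
  have hacyc : G.IsAcyclic := htree.IsAcyclic
  set D1 : Finset V := G.neighborFinset c with hD1
  set D2 : Finset V := Finset.univ.filter (fun v => G.dist c v = 2) with hD2
  have hcD1 : c ∉ D1 := by simp [hD1]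
  have hcD2 : c ∉ D2 := by simp [hD2, SimpleGraph.dist_self]
  have hmemD1 : ∀ v, v ∈ D1 ↔ G.Adj c v := by intro v; simp [hD1]
  have hmemD2 : ∀ v, v ∈ D2 ↔ G.dist c v = 2 := by intro v; simp [hD2]
  have hD1D2 : ∀ v, v ∈ D1 → v ∉ D2 := by
    intro v h1 h2
    rw [hmemD1] at h1; rw [hmemD2] at h2
    rw [← dist_eq_one_iff_adj] at h1
    omega
  have hcover : ∀ v : V, v = c ∨ v ∈ D1 ∨ v ∈ D2 := by
    intro v
    by_cases hvc : v = c
    · exact Or.inl hvc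
    · have h2 := (hstr v hvc).2.1
      have h0 : G.dist c v ≠ 0 := by
        intro h0eq; exact hvc ((hconn.dist_eq_zero_iff).mp h0eq).symm
      interval_cases hd : G.dist c v
      · exact absurd rfl h0
      · exact Or.inr (Or.inl ((hmemD1 v).2 (dist_eq_one_iff_adj.mp hd)))
      · exact Or.inr (Or.inr ((hmemD2 v).2 hd))
  have hleaf : ∀ l ∈ D2, G.degree l = 1 := by
    intro l hl
    rw [hmemD2] at hl
    have hlc : l ≠ c := by intro hh; rw [hh] at hl; simp [SimpleGraph.dist_self] at hl
    exact (hstr l hlc).2.2 hl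
  have huniq_nbr : ∀ l ∈ D2, ∀ x y, G.Adj x l → G.Adj y l → x = y := by
    intro l hl x y hx hy
    have h1 : (G.neighborFinset l).card = 1 := hleaf l hl
    have := Finset.card_le_one.mp (le_of_eq h1)
    exact this x (by rw [mem_neighborFinset]; exact hx.symm) y
      (by rw [mem_neighborFinset]; exact hy.symm)
  have hmid : ∀ l ∈ D2, ∃ m, G.Adj c m ∧ G.Adj m l := by
    intro l hl
    rw [hmemD2] at hl
    obtain ⟨p, hp⟩ := (hconn.preconnected c l).exists_walk_length_eq_dist
    exact aux_walk2 p (by rw [hp, hl])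
  set M : Finset V := D1.filter (fun m => ∃ l ∈ D2, G.Adj m l) with hM
  set P : Finset V := D1 \ M with hP
  have hMsub : M ⊆ D1 := Finset.filter_subset _ _
  have hdeg2 : ∀ v ∈ D1, G.degree v ≤ 2 := by
    intro v hv
    rw [hmemD1] at hv
    exact (hstr v (fun hh => G.irrefl (hh ▸ hv))).1
  have hD2M : D2.card = M.card := by
    refine Finset.card_bij (fun l hl => (hmid l hl).choose) ?_ ?_ ?_
    · intro l hl
      obtain ⟨h1, h2⟩ := (hmid l hl).choose_spec
      rw [hM, Finset.mem_filter]
      exact ⟨(hmemD1 _).2 h1, ⟨l, hl, h2⟩⟩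
    · intro l1 h1 l2 h2 heq
      by_contra hne
      obtain ⟨ha1, hb1⟩ := (hmid l1 h1).choose_spec
      obtain ⟨ha2, hb2⟩ := (hmid l2 h2).choose_spec
      set m := (hmid l1 h1).choose
      have heq' : m = (hmid l2 h2).choose := heq
      rw [← heq'] at hb2
      have hsub : ({c, l1, l2} : Finset V) ⊆ G.neighborFinset m := by
        intro x hx
        simp only [Finset.mem_insert, Finset.mem_singleton] at hx
        rw [mem_neighborFinset]
        rcases hx with rfl | rfl | rfl
        · exact ha1.symm
        · exact hb1
        · exact hb2
      have hc1 : c ≠ l1 := fun hh => hcD2 (hh ▸ h1)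
      have hc2 : c ≠ l2 := fun hh => hcD2 (hh ▸ h2)
      have hcard : ({c, l1, l2} : Finset V).card = 3 := by
        rw [Finset.card_insert_of_notMem (by simp [hc1, hc2]),
          Finset.card_insert_of_notMem (by simp [hne]), Finset.card_singleton]
      have := Finset.card_le_card hsub
      have hd := hdeg2 m ((hmemD1 m).2 ha1)
      rw [hcard] at this
      rw [SimpleGraph.degree] at hd
      omega
    · intro m hm
      rw [hM, Finset.mem_filter] at hm
      obtain ⟨hm1, l, hl, hml⟩ := hm
      refine ⟨l, hl, ?_⟩
      obtain ⟨ha1, hb1⟩ := (hmid l hl).choose_spec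
      exact huniq_nbr l hl _ m hb1 hml
  have hPcard : M.card + P.card = D1.card := by
    rw [hP, add_comm]
    exact Finset.card_sdiff_add_card_eq_card hMsub
  have huniv : (Finset.univ : Finset V) = insert c (D1 ∪ D2) := by
    ext v
    simp only [Finset.mem_univ, true_iff, Finset.mem_insert, Finset.mem_union]
    exact hcover v
  have hcardV : Fintype.card V = 1 + D1.card + D2.card := by
    rw [← Finset.card_univ, huniv, Finset.card_insert_of_notMem (by simp [hcD1, hcD2]),
      Finset.card_union_of_disjoint (Finset.disjoint_left.2 hD1D2)]
    omega
  have hdegD1 : G.degree c = D1.card := rfl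
  have hcol : ∀ col : Fin 2, col = 0 ∨ col = 1 := by decide
  -- scheme 2
  have hub2 : G.rainbowNum 2 ≤ 2 + D2.card := by
    set f : V → Finset (Fin 2) := fun v => if v = c then {0,1} else if v ∈ D2 then {0} else ∅
      with hf
    have hRDF : G.IsRainbowDF f := by
      intro v hv col
      have hvc : v ≠ c := by
        intro hh; rw [hf] at hv; simp [hh] at hv
      have hvD2 : v ∉ D2 := by
        intro hh; rw [hf] at hv; simp [hvc, hh] at hv
      have hvD1 : v ∈ D1 := by rcases hcover v with h' | h' | h' <;> tauto
      refine ⟨c, ((hmemD1 v).1 hvD1).symm, ?_⟩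
      rw [hf]; simp
      exact hcol col
    have hsum : ∑ v, (f v).card = 2 + D2.card := by
      have hpt : ∀ v, (f v).card = (if v = c then 2 else 0) + (if v ∈ D2 then 1 else 0) := by
        intro v
        by_cases h1 : v = c
        · subst h1; simp [hf, hcD2]
        · by_cases h2 : v ∈ D2 <;> simp [hf, h1, h2]
      rw [Finset.sum_congr rfl (fun v _ => hpt v), Finset.sum_add_distrib,
        Finset.sum_ite_eq' Finset.univ c (fun _ => 2), Finset.sum_ite_mem,
        Finset.univ_inter, Finset.sum_const, smul_eq_mul, mul_one]
      simp
    have hmemw : (∑ v, (f v).card) ∈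
        {w | ∃ f : V → Finset (Fin 2), G.IsRainbowDF f ∧ w = ∑ v, (f v).card} := ⟨f, hRDF, rfl⟩
    have hle : G.rainbowNum 2 ≤ ∑ v, (f v).card := Nat.sInf_le hmemw
    rw [hsum] at hle
    exact hle
  -- scheme 1
  have hub1 : G.rainbowNum 2 ≤ 1 + D2.card + P.card := by
    set f : V → Finset (Fin 2) := fun v =>
      if v = c then {1} else if v ∈ D2 then {0} else if v ∈ P then {0} else ∅ with hf
    have hRDF : G.IsRainbowDF f := by
      intro v hv col
      have hvc : v ≠ c := by
        intro hh; rw [hf] at hv; simp [hh] at hv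
      have hvD2 : v ∉ D2 := by
        intro hh; rw [hf] at hv; simp [hvc, hh] at hv
      have hvP : v ∉ P := by
        intro hh; rw [hf] at hv; simp [hvc, hvD2, hh] at hv
      have hvD1 : v ∈ D1 := by rcases hcover v with h' | h' | h' <;> tauto
      have hvM : v ∈ M := by
        rw [hP] at hvP; rw [Finset.mem_sdiff] at hvP; tauto
      rw [hM, Finset.mem_filter] at hvM
      obtain ⟨-, l, hl, hvl⟩ := hvM
      have hlc : l ≠ c := fun hh => hcD2 (hh ▸ hl)
      fin_cases col
      · refine ⟨l, hvl, ?_⟩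
        rw [hf]; simp [hlc, hl]
      · refine ⟨c, ((hmemD1 v).1 hvD1).symm, ?_⟩
        rw [hf]; simp
    have hsum : ∑ v, (f v).card = 1 + D2.card + P.card := by
      have hcP : c ∉ P := fun hh => hcD1 (Finset.mem_sdiff.mp hh).1
      have hD2P : ∀ v, v ∈ D2 → v ∉ P := by
        intro v h2 hp
        exact hD1D2 v (Finset.mem_sdiff.mp hp).1 h2
      have hpt : ∀ v, (f v).card = (if v = c then 1 else 0) +
          ((if v ∈ D2 then 1 else 0) + (if v ∈ P then 1 else 0)) := by
        intro v
        by_cases h1 : v = c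
        · subst h1; simp [hf, hcD2, hcP]
        · by_cases h2 : v ∈ D2
          · simp [hf, h1, h2, hD2P v h2]
          · by_cases h3 : v ∈ P <;> simp [hf, h1, h2, h3]
      rw [Finset.sum_congr rfl (fun v _ => hpt v), Finset.sum_add_distrib,
        Finset.sum_add_distrib, Finset.sum_ite_eq' Finset.univ c (fun _ => 1)]
      rw [Finset.sum_ite_mem, Finset.sum_ite_mem, Finset.univ_inter, Finset.univ_inter,
        Finset.sum_const, Finset.sum_const, smul_eq_mul, mul_one, smul_eq_mul, mul_one]
      simp [add_assoc]
    have hmemw : (∑ v, (f v).card) ∈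
        {w | ∃ f : V → Finset (Fin 2), G.IsRainbowDF f ∧ w = ∑ v, (f v).card} := ⟨f, hRDF, rfl⟩
    have hle : G.rainbowNum 2 ≤ ∑ v, (f v).card := Nat.sInf_le hmemw
    rw [hsum] at hle
    exact hle
  rw [hdegD1] at hdegc
  have hineq : 4 * G.rainbowNum 2 ≤ 3 * Fintype.card V := by omega
  -- the special case a = 1, s = 1
  have hcase : P.card = 1 → D2.card = 1 →
      3 ≤ G.rainbowNum 2 ∧ Nonempty (G ≃g SimpleGraph.pathGraph 4) := by
    intro hP1 hD21
    have hM1 : M.card = 1 := by omega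
    obtain ⟨l, hlD2⟩ := Finset.card_eq_one.mp hD21
    obtain ⟨m, hmM⟩ := Finset.card_eq_one.mp hM1
    obtain ⟨p, hpP⟩ := Finset.card_eq_one.mp hP1
    have hmMm : m ∈ M := by rw [hmM]; simp
    have hpPm : p ∈ P := by rw [hpP]; simp
    have hlD2m : l ∈ D2 := by rw [hlD2]; simp
    have hmD1 : m ∈ D1 := hMsub hmMm
    have hpD1 : p ∈ D1 := (Finset.mem_sdiff.mp hpPm).1
    have hcm : G.Adj c m := (hmemD1 m).1 hmD1
    have hcp : G.Adj c p := (hmemD1 p).1 hpD1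
    have hml : G.Adj m l := by
      have hmMm' := hmMm
      rw [hM, Finset.mem_filter] at hmMm'
      obtain ⟨-, l', hl', h'⟩ := hmMm'
      rw [hlD2, Finset.mem_singleton] at hl'
      exact hl' ▸ h'
    have hpm : p ≠ m := by
      intro hh
      exact (Finset.mem_sdiff.mp hpPm).2 (hh ▸ hmMm)
    have hpc : p ≠ c := fun hh => hcD1 (hh ▸ hpD1)
    have hmc : m ≠ c := fun hh => hcD1 (hh ▸ hmD1)
    have hlc : l ≠ c := fun hh => hcD2 (hh ▸ hlD2m)
    have hpl : p ≠ l := fun hh => hD1D2 p hpD1 (hh ▸ hlD2m)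
    have hml2 : m ≠ l := fun hh => hD1D2 m hmD1 (hh ▸ hlD2m)
    have hn1 : ¬ G.Adj c l := by
      intro hh
      have h2 := (hmemD2 l).1 hlD2m
      rw [← dist_eq_one_iff_adj] at hh
      omega
    have hn2 : ¬ G.Adj p m := fun hh => aux_no_tri hacyc hcp hh hcm
    have hn3 : ¬ G.Adj p l := by
      intro hh
      exact hpm (huniq_nbr l hlD2m p m hh hml)
    have hD1eq : D1 = ({m, p} : Finset V) := by
      ext v
      constructor
      · intro hv
        by_cases hvM : v ∈ M
        · rw [hmM, Finset.mem_singleton] at hvM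
          simp [hvM]
        · have hvP : v ∈ P := by rw [hP, Finset.mem_sdiff]; exact ⟨hv, hvM⟩
          rw [hpP, Finset.mem_singleton] at hvP
          simp [hvP]
      · intro hv
        simp only [Finset.mem_insert, Finset.mem_singleton] at hv
        rcases hv with rfl | rfl
        exacts [hmD1, hpD1]
    have huniv4 : (Finset.univ : Finset V) = ({p, c, m, l} : Finset V) := by
      rw [huniv, hD1eq, hlD2]
      ext v
      simp only [Finset.mem_insert, Finset.mem_union, Finset.mem_singleton]
      tauto
    have hcard4 : Fintype.card V = 4 := by omega
    have hNl : ∀ u, G.Adj l u → u = m := fun u hu => huniq_nbr l hlD2m u m hu.symm hml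
    have hNp : ∀ u, G.Adj p u → u = c := by
      intro u hu
      rcases hcover u with rfl | hu1 | hu2
      · rfl
      · exact absurd hu (fun hh => aux_no_tri hacyc hcp hh ((hmemD1 u).1 hu1))
      · rw [hlD2, Finset.mem_singleton] at hu2
        exact absurd (hu2 ▸ hu) hn3
    have hNm : ∀ u, G.Adj m u → u = c ∨ u = l := by
      intro u hu
      by_contra hcon
      push_neg at hcon
      obtain ⟨huc, hul⟩ := hcon
      have hsub : ({c, l, u} : Finset V) ⊆ G.neighborFinset m := by
        intro x hx
        simp only [Finset.mem_insert, Finset.mem_singleton] at hx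
        rw [mem_neighborFinset]
        rcases hx with rfl | rfl | rfl
        · exact hcm.symm
        · exact hml
        · exact hu
      have hcu : c ≠ u := fun hh => huc hh.symm
      have hlu : l ≠ u := fun hh => hul hh.symm
      have hcard3 : ({c, l, u} : Finset V).card = 3 := by
        rw [Finset.card_insert_of_notMem (by simp [Ne.symm hlc, hcu]),
          Finset.card_insert_of_notMem (by simp [hlu]),
          Finset.card_singleton]
      have hle3 := Finset.card_le_card hsub
      have hd := hdeg2 m hmD1
      rw [hcard3] at hle3
      rw [SimpleGraph.degree] at hd
      omega
    exact ⟨aux_lower_bound3 huniv4 hpc hpm hpl hmc hlc hml2 hNp hNm hNl,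
      aux_build_iso hcard4 hpc hpm hpl hmc hlc hml2 hcp hcm hml hn1 hn2 hn3⟩
  -- reverse: an isomorphism forces a = 1, s = 1
  have hrev : Nonempty (G ≃g SimpleGraph.pathGraph 4) → P.card = 1 ∧ D2.card = 1 := by
    rintro ⟨e⟩
    have hcard4 : Fintype.card V = 4 := by
      have := Fintype.card_congr e.toEquiv
      simpa using this
    have hD1ne3 : D1.card ≠ 3 := by
      intro h3
      obtain ⟨x, y, z, hxy, hxz, hyz, hD1xyz⟩ := Finset.card_eq_three.mp h3
      have hax : G.Adj c x := (hmemD1 x).1 (by rw [hD1xyz]; simp)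
      have hay : G.Adj c y := (hmemD1 y).1 (by rw [hD1xyz]; simp)
      have haz : G.Adj c z := (hmemD1 z).1 (by rw [hD1xyz]; simp)
      have hpx : (pathGraph 4).Adj (e c) (e x) := e.map_rel_iff.mpr hax
      have hpy : (pathGraph 4).Adj (e c) (e y) := e.map_rel_iff.mpr hay
      have hpz : (pathGraph 4).Adj (e c) (e z) := e.map_rel_iff.mpr haz
      rw [pathGraph_adj] at hpx hpy hpz
      rcases aux_fin4 (e c) (e x) (e y) (e z) hpx hpy hpz with hh | hh | hh
      · exact hxy (e.toEquiv.injective hh)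
      · exact hxz (e.toEquiv.injective hh)
      · exact hyz (e.toEquiv.injective hh)
    omega
  refine ⟨hineq, ?_, ?_⟩
  · intro heq
    have hP1 : P.card = 1 ∧ D2.card = 1 := by omega
    exact (hcase hP1.1 hP1.2).2
  · intro hiso
    obtain ⟨hP1, hD21⟩ := hrev hiso
    have hlow := (hcase hP1 hD21).1
    omega
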